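/- Fix a prime p, integers n ≥ 1 and 1 ≤ k ≤ n, and a ∈ Z_p. Writing δ^k(a + p^n u) = Σ_{j=0}^{p^k} c^k_{a,j} u^j as a polynomial in u, the linear coefficient satisfies |c^k_{a,1}|_p = p^{-(n-k)} exactly. -/

import Mathlib

open Polynomial Finset

section Aux
variable {p : ℕ} [Fact p.Prime]

private lemma coeff_sum_CX {F : Type*} [Field F] (f : ℕ → F) (N m : ℕ) (hm : m < N) :
    (∑ j ∈ Finset.range N, C (f j) * X ^ j).coeff m = f m := by
  rw [Polynomial.finset_sum_coeff]
  rw [Finset.sum_eq_single m]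
  · simp
  · intro b _ hb
    simp [Polynomial.coeff_X_pow, hb, Ne.symm hb]
  · intro h; exact absurd (Finset.mem_range.2 hm) h

private lemma coeff_unique (N : ℕ) (c d : ℕ → ℚ_[p])
    (h : ∀ u : ℤ_[p], ∑ j ∈ Finset.range N, c j * (u : ℚ_[p]) ^ j
        = ∑ j ∈ Finset.range N, d j * (u : ℚ_[p]) ^ j) :
    ∀ m < N, c m = d m := by
  set P : ℚ_[p][X] := ∑ j ∈ Finset.range N, C (c j - d j) * X ^ j with hP
  have hroot : ∀ u : ℤ_[p], P.eval (u : ℚ_[p]) = 0 := by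
    intro u
    have := h u
    simp only [hP, eval_finset_sum, eval_mul, eval_C, eval_pow, eval_X, sub_mul]
    rw [Finset.sum_sub_distrib, this, sub_self]
  have hinf : {x : ℚ_[p] | P.IsRoot x}.Infinite := by
    exact Set.infinite_of_injective_forall_mem
      (f := fun u : ℤ_[p] => (u : ℚ_[p])) Subtype.coe_injective hroot
  have hP0 : P = 0 := Polynomial.eq_zero_of_infinite_isRoot P hinf
  intro m hm
  have := coeff_sum_CX (fun j => c j - d j) N m hm
  rw [← hP, hP0] at this
  simp only [Polynomial.coeff_zero] at this
  exact sub_eq_zero.mp this.symm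

private lemma exists_coeffs (δ : ℤ_[p] → ℤ_[p])
    (hδ : ∀ x : ℤ_[p], (p : ℤ_[p]) * δ x = x - x ^ p) (n : ℕ) (a : ℤ_[p]) :
    ∀ k, k ≤ n → ∃ d : ℕ → ℚ_[p],
      (∀ u : ℤ_[p], ((δ^[k] (a + (p : ℤ_[p]) ^ n * u) : ℤ_[p]) : ℚ_[p]) =
        ∑ j ∈ Finset.range (p ^ k + 1), d j * (u : ℚ_[p]) ^ j)
      ∧ ‖d 1‖ = (p : ℝ) ^ ((k : ℤ) - n) := by
  have hp2 : 1 < p := (Fact.out : p.Prime).one_lt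
  have hpQ : (p : ℚ_[p]) ≠ 0 := Nat.cast_ne_zero.2 (Fact.out : p.Prime).ne_zero
  have hpR : (1:ℝ) < (p:ℝ) := by exact_mod_cast hp2
  intro k
  induction k with
  | zero =>
    intro _
    refine ⟨fun j => if j = 0 then (a : ℚ_[p]) else if j = 1 then (p : ℚ_[p]) ^ n else 0,
      ?_, ?_⟩
    · intro u
      simp [Finset.sum_range_succ]
    · norm_num
  | succ k ih =>
    intro hkn
    obtain ⟨d, hdev, hd1⟩ := ih (Nat.le_of_succ_le hkn)
    set N := p ^ k + 1 with hN
    set Q : ℚ_[p][X] := ∑ j ∈ Finset.range N, C (d j) * X ^ j with hQ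
    have hQeval : ∀ u : ℤ_[p],
        Q.eval (u : ℚ_[p]) = ((δ^[k] (a + (p : ℤ_[p]) ^ n * u) : ℤ_[p]) : ℚ_[p]) := by
      intro u
      rw [hdev u, hQ]
      simp [eval_finset_sum]
    have hQdeg : Q.natDegree ≤ p ^ k := by
      apply Polynomial.natDegree_sum_le_of_forall_le
      intro j hj
      exact le_trans (Polynomial.natDegree_C_mul_X_pow_le _ _)
        (Nat.lt_succ_iff.mp (Finset.mem_range.mp hj))
    set R : ℚ_[p][X] := C ((p : ℚ_[p])⁻¹) * (Q - Q ^ p) with hR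
    have hRdeg : R.natDegree < p ^ (k + 1) + 1 := by
      have h1 : (Q - Q ^ p).natDegree ≤ p ^ (k+1) := by
        refine le_trans (Polynomial.natDegree_sub_le _ _) (max_le ?_ ?_)
        · exact le_trans hQdeg (Nat.pow_le_pow_right (Nat.le_of_lt hp2) (Nat.le_succ k))
        · refine le_trans Polynomial.natDegree_pow_le ?_
          calc p * Q.natDegree ≤ p * p ^ k := Nat.mul_le_mul_left p hQdeg
          _ = p ^ (k+1) := by ring
      calc R.natDegree ≤ (Q - Q^p).natDegree := Polynomial.natDegree_C_mul_le _ _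
        _ < p ^ (k+1) + 1 := Nat.lt_succ_of_le h1
    have hReval : ∀ u : ℤ_[p],
        R.eval (u : ℚ_[p]) = ((δ^[k+1] (a + (p : ℤ_[p]) ^ n * u) : ℤ_[p]) : ℚ_[p]) := by
      intro u
      set y : ℤ_[p] := δ^[k] (a + (p : ℤ_[p]) ^ n * u) with hy
      have h1 : δ^[k+1] (a + (p : ℤ_[p]) ^ n * u) = δ y := by
        rw [Function.iterate_succ_apply']
      have h2 : (p : ℚ_[p]) * ((δ y : ℤ_[p]) : ℚ_[p]) = (y : ℚ_[p]) - (y : ℚ_[p]) ^ p := by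
        have := hδ y
        exact_mod_cast congrArg (fun z : ℤ_[p] => (z : ℚ_[p])) this
      rw [h1, hR]
      simp only [eval_mul, eval_C, eval_sub, eval_pow]
      rw [hQeval u, ← hy]
      field_simp
      linear_combination -h2
    -- coefficients
    have hd0 : ‖d 0‖ ≤ 1 := by
      have h0 := hdev 0
      rw [Finset.sum_eq_single 0] at h0
      · simp only [PadicInt.coe_zero, pow_zero, mul_one] at h0
        rw [← h0, PadicInt.padic_norm_e_of_padicInt]
        exact PadicInt.norm_le_one _
      · intro b _ hb
        simp [zero_pow hb]
      · intro h; exact absurd (Finset.mem_range.2 (Nat.succ_pos _)) h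
    have hQc0 : Q.coeff 0 = d 0 := coeff_sum_CX d N 0 (Nat.succ_pos _)
    have hQc1 : Q.coeff 1 = d 1 := by
      apply coeff_sum_CX d N 1
      have : 0 < p ^ k := Nat.pow_pos (Nat.lt_of_lt_of_le Nat.zero_lt_one hp2.le)
      omega
    have hQp1 : (Q ^ p).coeff 1 = (p : ℚ_[p]) * (d 0) ^ (p - 1) * d 1 := by
      have h1 : (Q ^ p).coeff 1 = (derivative (Q ^ p)).coeff 0 := by
        rw [Polynomial.coeff_derivative]; ring
      rw [h1, Polynomial.derivative_pow, Polynomial.coeff_zero_eq_eval_zero]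
      simp only [eval_mul, eval_C, eval_pow]
      rw [Polynomial.coeff_zero_eq_eval_zero] at hQc0
      have hd : (derivative Q).eval 0 = d 1 := by
        rw [← Polynomial.coeff_zero_eq_eval_zero, Polynomial.coeff_derivative, hQc1]
        ring
      rw [hd, hQc0]
    have hR1 : R.coeff 1 = d 1 * ((p : ℚ_[p])⁻¹ - (d 0) ^ (p - 1)) := by
      rw [hR, Polynomial.coeff_C_mul, Polynomial.coeff_sub, hQc1, hQp1]
      field_simp
    refine ⟨fun j => R.coeff j, ?_, ?_⟩
    · intro u
      rw [← hReval u]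
      exact Polynomial.eval_eq_sum_range' hRdeg _
    · have hfac : ‖(p : ℚ_[p])⁻¹ - (d 0) ^ (p - 1)‖ = (p : ℝ) := by
        have hninv : ‖(p : ℚ_[p])⁻¹‖ = (p : ℝ) := by
          rw [norm_inv, Padic.norm_p, inv_inv]
        have hlt : ‖(d 0) ^ (p - 1)‖ < (p : ℝ) := by
          calc ‖(d 0) ^ (p - 1)‖ ≤ 1 := by
                rw [norm_pow]; exact pow_le_one₀ (norm_nonneg _) hd0
          _ < (p : ℝ) := hpR
        have hne : ‖(p : ℚ_[p])⁻¹‖ ≠ ‖-((d 0) ^ (p - 1))‖ := by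
          rw [hninv, norm_neg]; exact hlt.ne'
        rw [sub_eq_add_neg, Padic.add_eq_max_of_ne hne, hninv, norm_neg]
        exact max_eq_left hlt.le
      simp only [hR1, norm_mul, hfac, hd1]
      rw [← zpow_add_one₀ (by positivity : (p:ℝ) ≠ 0)]
      congr 1
      push_cast
      ring

end Aux

theorem fermat_iterate_linear_coeff (p : ℕ) [Fact p.Prime]
    (δ : ℤ_[p] → ℤ_[p]) (hδ : ∀ x : ℤ_[p], (p : ℤ_[p]) * δ x = x - x ^ p)
    (n k : ℕ) (hk1 : 1 ≤ k) (hkn : k ≤ n) (a : ℤ_[p]) (c : ℕ → ℚ_[p])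
    (hc : ∀ u : ℤ_[p],
      ((δ^[k] (a + (p : ℤ_[p]) ^ n * u) : ℤ_[p]) : ℚ_[p]) =
        ∑ j ∈ Finset.range (p ^ k + 1), c j * (u : ℚ_[p]) ^ j) :
    ‖c 1‖ = (p : ℝ) ^ (-((n : ℤ) - (k : ℤ))) := by
  obtain ⟨d, hdev, hd1⟩ := exists_coeffs δ hδ n a k hkn
  have heq : c 1 = d 1 := by
    apply coeff_unique (p ^ k + 1) c d
    · intro u; rw [← hc u, ← hdev u]
    · have hp2 : 1 < p := (Fact.out : p.Prime).one_lt
      have : 0 < p ^ k := Nat.pow_pos (by omega)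
      omega
  rw [heq, hd1]
  congr 1
  ring
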